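/- Let G be an infinitely generated free abelian group. Then the ideal S_G of small subsets of G is not auto-invariant: there exists an injective endomorphism h : G → G and a subset A ⊆ G with h(A) small in G but A not small in G. -/

import Mathlib

open Pointwise

/-- A subset `A` of an additive group `G` is large if `G = F + A` for some finite `F ⊆ G`. -/
def IsLargeAdd {G : Type} [AddCommGroup G] (A : Set G) : Prop :=
  ∃ F : Finset G, (↑F : Set G) + A = Set.univ

/-- A subset `A` is small if `L \ A` is large for every large `L ⊆ G`. -/
def IsSmallAdd {G : Type} [AddCommGroup G] (A : Set G) : Prop :=
  ∀ L : Set G, IsLargeAdd L → IsLargeAdd (L \ A)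

/-- A subgroup that is not large (no finitely many translates cover `G`) is small. -/
lemma small_of_subgroup_not_large {G : Type} [AddCommGroup G] (H : AddSubgroup G)
    (hH : ∀ F : Finset G, (↑F : Set G) + (H : Set G) ≠ Set.univ) :
    IsSmallAdd (H : Set G) := by
  classical
  rintro L ⟨F, hF⟩
  obtain ⟨t, ht⟩ : ∃ t, t ∉ (↑(F - F) : Set G) + (H : Set G) := by
    by_contra hc
    push_neg at hc
    exact hH (F - F) (Set.eq_univ_of_forall hc)
  refine ⟨F ∪ (t +ᵥ F), Set.eq_univ_of_forall fun g => ?_⟩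
  by_cases hg : g ∈ (↑F : Set G) + (H : Set G)
  · have hgt : g - t ∉ (↑F : Set G) + (H : Set G) := by
      intro hmem
      obtain ⟨f', hf', k', hk', hfk'⟩ := Set.mem_add.mp hmem
      obtain ⟨f, hf, k, hk, hfk⟩ := Set.mem_add.mp hg
      apply ht
      refine Set.mem_add.mpr ⟨f - f', ?_, k - k', sub_mem hk hk', ?_⟩
      · exact_mod_cast Finset.sub_mem_sub hf hf'
      · have : t = (f + k) - (f' + k') := by rw [hfk, hfk']; abel
        rw [this]; abel
    have : g - t ∈ (↑F : Set G) + L := hF ▸ Set.mem_univ _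
    obtain ⟨f, hf, l, hl, hfl⟩ := Set.mem_add.mp this
    have hlH : l ∉ (H : Set G) := fun hlh => hgt (Set.mem_add.mpr ⟨f, hf, l, hlh, hfl⟩)
    refine Set.mem_add.mpr ⟨t + f, ?_, l, ⟨hl, hlH⟩, ?_⟩
    · simp only [Finset.coe_union, Set.mem_union, Finset.mem_coe]
      exact Or.inr (by simpa using Finset.vadd_mem_vadd_finset (a := t) hf)
    · rw [add_assoc, hfl]; abel
  · have : g ∈ (↑F : Set G) + L := hF ▸ Set.mem_univ _
    obtain ⟨f, hf, l, hl, hfl⟩ := Set.mem_add.mp this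
    have hlH : l ∉ (H : Set G) := fun hlh => hg (Set.mem_add.mpr ⟨f, hf, l, hlh, hfl⟩)
    exact Set.mem_add.mpr ⟨f, by simp [hf], l, ⟨hl, hlH⟩, hfl⟩

/-- For an infinitely generated free abelian group `G`, the ideal of small subsets is not
auto-invariant: some injective endomorphism `h` and some `A ⊆ G` have `h(A)` small but `A`
not small. -/
theorem stmt_15 {G : Type} [AddCommGroup G] [Module.Free ℤ G]
    (hfg : ¬ Module.Finite ℤ G) :
    ∃ h : G →+ G, Function.Injective h ∧
      ∃ A : Set G, IsSmallAdd (⇑h '' A) ∧ ¬ IsSmallAdd A := by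
  classical
  set ι := Module.Free.ChooseBasisIndex ℤ G with hι
  let b : Module.Basis ι ℤ G := Module.Free.chooseBasis ℤ G
  haveI : Infinite ι := by
    rw [← not_finite_iff_infinite]
    intro hfin
    exact hfg (Module.Finite.of_basis b)
  obtain ⟨e⟩ : Nonempty (ι ⊕ ι ≃ ι) := by
    rw [← Cardinal.eq]
    simp [Cardinal.mk_sum, Cardinal.add_eq_self (Cardinal.aleph0_le_mk ι)]
  -- the injective endomorphism, sending basis vector `b i` to `b (e (Sum.inl i))`
  let h : G →ₗ[ℤ] G :=
    b.repr.symm.toLinearMap ∘ₗ Finsupp.lmapDomain ℤ ℤ (e ∘ Sum.inl) ∘ₗ b.repr.toLinearMap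
  have hinj : Function.Injective h := by
    simp only [h, LinearMap.coe_comp, LinearEquiv.coe_coe]
    exact b.repr.symm.injective.comp
      ((Finsupp.mapDomain_injective (e.injective.comp Sum.inl_injective)).comp b.repr.injective)
  -- the projection onto the "unused" coordinates
  let π : G →ₗ[ℤ] (ι →₀ ℤ) :=
    Finsupp.lcomapDomain (fun j => e (Sum.inr j)) (e.injective.comp Sum.inr_injective)
      ∘ₗ b.repr.toLinearMap
  have hπh : ∀ x, π (h x) = 0 := by
    intro x
    ext j
    simp only [π, h, LinearMap.coe_comp, LinearEquiv.coe_coe, Function.comp_apply,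
      Finsupp.lcomapDomain, Finsupp.lmapDomain_apply, LinearEquiv.apply_symm_apply,
      LinearMap.coe_mk, AddHom.coe_mk, Finsupp.comapDomain_apply, Finsupp.coe_zero,
      Pi.zero_apply]
    apply Finsupp.mapDomain_notin_range
    rintro ⟨i, hi⟩
    exact (Sum.inl_ne_inr (e.injective hi)).elim
  have hπc : ∀ j : ι, π (b (e (Sum.inr j))) = Finsupp.single j 1 := by
    intro j
    ext j'
    simp only [π, LinearMap.coe_comp, LinearEquiv.coe_coe, Function.comp_apply,
      Finsupp.lcomapDomain, Module.Basis.repr_self, LinearMap.coe_mk, AddHom.coe_mk,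
      Finsupp.comapDomain_apply, Finsupp.single_apply, e.injective.eq_iff, Sum.inr.injEq]
  let H : AddSubgroup G := (LinearMap.range h).toAddSubgroup
  have hHset : (H : Set G) = Set.range h := rfl
  -- the range of `h` is not large
  have hnotlarge : ∀ F : Finset G, (↑F : Set G) + (H : Set G) ≠ Set.univ := by
    intro F heq
    have key : ∀ j : ι, ∃ f ∈ F, π f = Finsupp.single j 1 := by
      intro j
      have : b (e (Sum.inr j)) ∈ (↑F : Set G) + (H : Set G) := heq ▸ Set.mem_univ _
      obtain ⟨f, hf, y, hy, hfy⟩ := Set.mem_add.mp this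
      obtain ⟨x, hx⟩ := hHset ▸ hy
      refine ⟨f, hf, ?_⟩
      have : π (b (e (Sum.inr j))) = π f + π y := by rw [← hfy]; simp
      rw [hπc j, ← hx, hπh] at this
      simpa using this.symm
    choose φ hφF hφ using key
    have φinj : Function.Injective φ := by
      intro j j' hjj'
      have : (Finsupp.single j 1 : ι →₀ ℤ) = Finsupp.single j' 1 := by
        rw [← hφ j, ← hφ j', hjj']
      exact Finsupp.single_left_injective one_ne_zero this
    have : Finite ι := Finite.of_injective (fun j => (⟨φ j, hφF j⟩ : {x // x ∈ F}))
      fun j j' hh => φinj (congrArg Subtype.val hh)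
    exact not_finite ι
  refine ⟨h.toAddMonoidHom, hinj, Set.univ, ?_, ?_⟩
  · have himg : (⇑h.toAddMonoidHom '' Set.univ) = (H : Set G) := by
      rw [hHset, Set.image_univ]; rfl
    rw [himg]
    exact small_of_subgroup_not_large H hnotlarge
  · intro hs
    have hlarge : IsLargeAdd (Set.univ : Set G) := by
      refine ⟨{0}, Set.eq_univ_of_forall fun g => ?_⟩
      exact Set.mem_add.mpr ⟨0, by simp, g, trivial, by simp⟩
    obtain ⟨F, hF⟩ := hs Set.univ hlarge
    rw [Set.diff_self, Set.add_empty] at hF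
    exact (Set.empty_ne_univ hF)
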